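/- Let k ≥ 9 be an integer and let G be a finite simple graph with Δ(G) ≤ k. Suppose G contains a vertex v of degree 4 all of whose four neighbors have degree at most 5. If G − v admits an incidence (k+4, 4)-coloring, then G admits an incidence (k+4, 4)-coloring. -/

import Mathlib

open SimpleGraph

/-- An incidence coloring of `G` with `n` colors, where `φ v u` is the color of the
incidence `(v, vu)` (meaningful when `G.Adj v u`): two distinct adjacent incidences
`(v, vu)` and `(w, wx)` receive distinct colors. Incidences `(v, e)` and `(w, f)` are
adjacent if `v = w`, or `e = f`, or the edge `vw` equals `e` or `f`. -/
def IsIncidenceColoring {V : Type*} (G : SimpleGraph V) {n : ℕ} (φ : V → V → Fin n) : Prop :=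
  ∀ ⦃v u w x : V⦄, G.Adj v u → G.Adj w x → (v, u) ≠ (w, x) →
    (v = w ∨ s(v, u) = s(w, x) ∨ s(v, w) = s(v, u) ∨ s(v, w) = s(w, x)) →
    φ v u ≠ φ w x

/-- `G` admits an incidence `(n, ℓ)`-coloring: an incidence coloring with `n` colors such
that for every vertex `v`, at most `ℓ` distinct colors appear on the incidences of the
form `(u, uv)` where `u` ranges over the neighbors of `v`. -/
def HasIncidenceColoring {V : Type*} (G : SimpleGraph V) (n ℓ : ℕ) : Prop :=
  ∃ φ : V → V → Fin n, IsIncidenceColoring G φ ∧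
    ∀ v : V, ({c : Fin n | ∃ u : V, G.Adj u v ∧ φ u v = c}).ncard ≤ ℓ

/-- The incidence chromatic number: the least `n` such that `G` admits an incidence
`n`-coloring. -/
noncomputable def incChromaticNumber {V : Type*} (G : SimpleGraph V) : ℕ :=
  sInf {n : ℕ | ∃ φ : V → V → Fin n, IsIncidenceColoring G φ}

/-- `mad(G) < q`: every nonempty subgraph `H` of `G` satisfies `2|E(H)| < q·|V(H)|`. -/
def MadLT {V : Type*} (G : SimpleGraph V) (q : ℝ) : Prop :=
  ∀ H : G.Subgraph, H.verts.Nonempty →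
    (2 * H.edgeSet.ncard : ℝ) < q * H.verts.ncard

theorem incidence_extend_four_vertex_all_small {V : Type*} [Fintype V] (G : SimpleGraph V)
    [DecidableRel G.Adj] (k : ℕ) (hk : 9 ≤ k) (hΔ : G.maxDegree ≤ k)
    (v : V) (hdv : G.degree v = 4)
    (hnb : ∀ w : V, G.Adj v w → G.degree w ≤ 5)
    (hcol : HasIncidenceColoring (G.induce ({v}ᶜ : Set V)) (k + 4) 4) :
    HasIncidenceColoring G (k + 4) 4 := by
  classical
  obtain ⟨φ, hφ, hℓ⟩ := hcol
  set G' := G.induce ({v}ᶜ : Set V) with hG'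
  have hm : ∀ {a : V}, a ≠ v → a ∈ ({v}ᶜ : Set V) := fun h => Set.mem_compl_singleton_iff.mpr h
  have hGadj : ∀ (a b : ↥({v}ᶜ : Set V)), G'.Adj a b ↔ G.Adj ↑a ↑b := by
    intro a b; simp [hG']
  -- the sets of colors at a vertex
  set A : ↥({v}ᶜ : Set V) → Finset (Fin (k+4)) :=
    fun w => (Finset.univ.filter (fun u : ↥({v}ᶜ : Set V) => G.Adj ↑u ↑w)).image (fun u => φ u w) with hA
  set B : ↥({v}ᶜ : Set V) → Finset (Fin (k+4)) :=
    fun w => (Finset.univ.filter (fun u : ↥({v}ᶜ : Set V) => G.Adj ↑w ↑u)).image (fun u => φ w u) with hB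
  have hAset : ∀ w : ↥({v}ᶜ : Set V),
      (↑(A w) : Set (Fin (k+4))) = {c | ∃ u, G'.Adj u w ∧ φ u w = c} := by
    intro w; ext c
    simp [hA, hGadj, eq_comm]
  have hA4 : ∀ w, (A w).card ≤ 4 := by
    intro w
    have := hℓ w
    rw [← hAset w, Set.ncard_coe_finset] at this
    exact this
  have hB4 : ∀ w : ↥({v}ᶜ : Set V), G.Adj v ↑w → (B w).card ≤ 4 := by
    intro w hw
    have h1 : (B w).card ≤ (Finset.univ.filter (fun u : ↥({v}ᶜ : Set V) => G.Adj ↑w ↑u)).card :=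
      Finset.card_image_le
    have h2 : (Finset.univ.filter (fun u : ↥({v}ᶜ : Set V) => G.Adj ↑w ↑u)).card
        ≤ ((G.neighborFinset ↑w).erase v).card := by
      apply Finset.card_le_card_of_injOn (fun u => ↑u)
      · intro u hu
        simp only [Finset.mem_coe, Finset.mem_filter, Finset.mem_univ, true_and] at hu ⊢
        rw [Finset.mem_erase, SimpleGraph.mem_neighborFinset]
        exact ⟨Set.mem_compl_singleton_iff.mp u.2, hu⟩
      · intro x _ y _ h; exact Subtype.ext h
    have h3 : ((G.neighborFinset ↑w).erase v).card = G.degree ↑w - 1 := by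
      rw [Finset.card_erase_of_mem, SimpleGraph.card_neighborFinset_eq_degree]
      rw [SimpleGraph.mem_neighborFinset]; exact hw.symm
    have h4 : G.degree ↑w ≤ 5 := hnb _ hw
    omega
  have hAB : ∀ w, Disjoint (A w) (B w) := by
    intro w
    rw [Finset.disjoint_left]
    intro c hca hcb
    simp only [hA, hB, Finset.mem_image, Finset.mem_filter, Finset.mem_univ, true_and] at hca hcb
    obtain ⟨x, hx, hxc⟩ := hca
    obtain ⟨y, hy, hyc⟩ := hcb
    have hxw : x ≠ w := fun h => (G.irrefl (h ▸ hx))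
    refine hφ ((hGadj x w).mpr hx) ((hGadj w y).mpr hy) ?_ ?_ (hxc.trans hyc.symm)
    · intro h; exact hxw (congrArg Prod.fst h)
    · right; right; left; rfl
  -- neighbors of v
  set nb := G.neighborFinset v with hnbd
  have hlift : ∀ w : ↥nb, (↑w : V) ≠ v := by
    intro w
    have := (SimpleGraph.mem_neighborFinset G v ↑w).mp w.2
    exact this.ne'
  set lift : ↥nb → ↥({v}ᶜ : Set V) := fun w => ⟨↑w, hm (hlift w)⟩ with hliftdef
  have hcard4 : Fintype.card ↥nb = 4 := by
    rw [Fintype.card_coe]; exact hdv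
  -- Hall to pick the top colors
  set P : ↥nb → Finset (Fin (k+4)) :=
    fun w => if 4 ≤ (A (lift w)).card then A (lift w) else (B (lift w))ᶜ with hP
  have hP4 : ∀ w, 4 ≤ (P w).card := by
    intro w
    simp only [hP]
    by_cases h : 4 ≤ (A (lift w)).card
    · rw [if_pos h]; exact h
    · rw [if_neg h, Finset.card_compl]
      have := hB4 (lift w) ((SimpleGraph.mem_neighborFinset G v ↑w).mp w.2)
      simp only [Fintype.card_fin]
      omega
  obtain ⟨t, htinj, htmem⟩ : ∃ t : ↥nb → Fin (k+4), Function.Injective t ∧ ∀ w, t w ∈ P w := by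
    rw [← Finset.all_card_le_biUnion_card_iff_exists_injective]
    intro s
    rcases s.eq_empty_or_nonempty with rfl | ⟨w, hw⟩
    · simp
    · calc s.card ≤ Fintype.card ↥nb := Finset.card_le_univ s
        _ = 4 := hcard4
        _ ≤ (P w).card := hP4 w
        _ ≤ (s.biUnion P).card := Finset.card_le_card (fun c hc => Finset.mem_biUnion.mpr ⟨w, hw, hc⟩)
  have htB : ∀ w, t w ∉ B (lift w) := by
    intro w
    have := htmem w
    simp only [hP] at this
    by_cases h : 4 ≤ (A (lift w)).card
    · rw [if_pos h] at this
      exact fun hb => (Finset.disjoint_left.mp (hAB (lift w))) this hb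
    · rw [if_neg h] at this
      exact Finset.mem_compl.mp this
  have htA : ∀ w, 4 ≤ (A (lift w)).card → t w ∈ A (lift w) := by
    intro w h
    have := htmem w
    simp only [hP] at this; rwa [if_pos h] at this
  -- bottom colors
  have hbot : ∀ w : ↥nb, ∃ c : Fin (k+4),
      c ∉ A (lift w) ∧ c ∉ B (lift w) ∧ ∀ w', c ≠ t w' := by
    intro w
    have hforb : (A (lift w) ∪ B (lift w) ∪ Finset.univ.image t).card < k + 4 := by
      have h1 := hA4 (lift w)
      have h2 := hB4 (lift w) ((SimpleGraph.mem_neighborFinset G v ↑w).mp w.2)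
      have h3 : (Finset.univ.image t).card ≤ 4 := by
        calc (Finset.univ.image t).card ≤ (Finset.univ : Finset ↥nb).card := Finset.card_image_le
          _ = 4 := by rw [Finset.card_univ]; exact hcard4
      calc (A (lift w) ∪ B (lift w) ∪ Finset.univ.image t).card
          ≤ (A (lift w) ∪ B (lift w)).card + (Finset.univ.image t).card := Finset.card_union_le _ _
        _ ≤ (A (lift w)).card + (B (lift w)).card + (Finset.univ.image t).card := by
            have := Finset.card_union_le (A (lift w)) (B (lift w)); omega
        _ < k + 4 := by omega
    obtain ⟨c, hc⟩ : ((A (lift w) ∪ B (lift w) ∪ Finset.univ.image t)ᶜ).Nonempty := by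
      rw [← Finset.card_pos, Finset.card_compl, Fintype.card_fin]
      omega
    rw [Finset.mem_compl, Finset.mem_union, Finset.mem_union] at hc
    push_neg at hc
    refine ⟨c, hc.1.1, hc.1.2, fun w' h => hc.2 ?_⟩
    exact Finset.mem_image.mpr ⟨w', Finset.mem_univ _, h.symm⟩
  choose bo hboA hboB hbot using hbot
  -- the extended coloring
  set ψ : V → V → Fin (k+4) := fun a b =>
    if ha : a = v then (if hb : b ∈ nb then t ⟨b, hb⟩ else 0)
    else if hb : b = v then (if ha' : a ∈ nb then bo ⟨a, ha'⟩ else 0)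
    else φ ⟨a, hm ha⟩ ⟨b, hm hb⟩ with hψ
  have evtop : ∀ (b : V) (hb : b ∈ nb), ψ v b = t ⟨b, hb⟩ := by
    intro b hb
    simp only [hψ, dif_pos rfl, dif_pos hb]
  have evbot : ∀ (a : V) (ha : a ∈ nb), ψ a v = bo ⟨a, ha⟩ := by
    intro a ha
    have ha' : a ≠ v := hlift ⟨a, ha⟩
    simp only [hψ, dif_neg ha', dif_pos rfl, dif_pos ha]
    simp
  have evold : ∀ (a b : V) (ha : a ≠ v) (hb : b ≠ v), ψ a b = φ ⟨a, hm ha⟩ ⟨b, hm hb⟩ := by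
    intro a b ha hb
    simp only [hψ, dif_neg ha, dif_neg hb]
  -- membership helpers
  have memA : ∀ (x w : V) (hx : x ≠ v) (hw : w ≠ v), G.Adj x w →
      φ ⟨x, hm hx⟩ ⟨w, hm hw⟩ ∈ A ⟨w, hm hw⟩ := by
    intro x w hx hw hxw
    simp only [hA, Finset.mem_image]
    exact ⟨⟨x, hm hx⟩, Finset.mem_filter.mpr ⟨Finset.mem_univ _, hxw⟩, rfl⟩
  have memB : ∀ (w x : V) (hw : w ≠ v) (hx : x ≠ v), G.Adj w x →
      φ ⟨w, hm hw⟩ ⟨x, hm hx⟩ ∈ B ⟨w, hm hw⟩ := by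
    intro w x hw hx hwx
    simp only [hB, Finset.mem_image]
    exact ⟨⟨x, hm hx⟩, Finset.mem_filter.mpr ⟨Finset.mem_univ _, hwx⟩, rfl⟩
  refine ⟨ψ, ?_, ?_⟩
  · -- properness
    intro a b c d hab hcd hne hcond
    by_cases ha : a = v
    · subst a
      have hbv : b ≠ v := hab.ne'
      have hbnb : b ∈ nb := (G.mem_neighborFinset v b).mpr hab
      rw [evtop b hbnb]
      by_cases hc : c = v
      · subst c
        have hdnb : d ∈ nb := (G.mem_neighborFinset v d).mpr hcd
        rw [evtop d hdnb]
        intro h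
        have hbd : b = d := congrArg Subtype.val (htinj h)
        exact hne (by rw [hbd])
      · by_cases hd : d = v
        · subst d
          have hcnb : c ∈ nb := (G.mem_neighborFinset v c).mpr hcd.symm
          rw [evbot c hcnb]
          exact fun h => hbot ⟨c, hcnb⟩ ⟨b, hbnb⟩ h.symm
        · have hcb : c = b := by
            rcases hcond with h | h | h | h
            · exact absurd h.symm hc
            · rw [Sym2.eq_iff] at h
              rcases h with ⟨h1, h2⟩ | ⟨h1, h2⟩
              · exact absurd h1.symm hc
              · exact absurd h1.symm hd
            · rw [Sym2.eq_iff] at h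
              rcases h with ⟨h1, h2⟩ | ⟨h1, h2⟩
              · exact h2
              · exact absurd h1.symm hbv
            · rw [Sym2.eq_iff] at h
              rcases h with ⟨h1, h2⟩ | ⟨h1, h2⟩
              · exact absurd h1.symm hc
              · exact absurd h1.symm hd
          subst hcb
          rw [evold c d hc hd]
          exact fun h => htB ⟨c, hbnb⟩ (h ▸ memB c d hc hd hcd)
    · by_cases hb : b = v
      · subst b
        have hanb : a ∈ nb := (G.mem_neighborFinset v a).mpr hab.symm
        rw [evbot a hanb]
        by_cases hc : c = v
        · subst c
          have hdv : d ≠ v := hcd.ne'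
          have hdnb : d ∈ nb := (G.mem_neighborFinset v d).mpr hcd
          rw [evtop d hdnb]
          exact hbot ⟨a, hanb⟩ ⟨d, hdnb⟩
        · by_cases hd : d = v
          · subst d
            exfalso
            have hac : a ≠ c := fun h => hne (by rw [h])
            rcases hcond with h | h | h | h
            · exact hac h
            · rw [Sym2.eq_iff] at h
              rcases h with ⟨h1, h2⟩ | ⟨h1, h2⟩
              · exact hac h1
              · exact ha h1
            · rw [Sym2.eq_iff] at h
              rcases h with ⟨h1, h2⟩ | ⟨h1, h2⟩
              · exact hc h2
              · exact ha h1
            · rw [Sym2.eq_iff] at h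
              rcases h with ⟨h1, h2⟩ | ⟨h1, h2⟩
              · exact hc h2
              · exact ha h1
          · rcases hcond with h | h | h | h
            · subst h
              rw [evold a d ha hd]
              exact fun h => hboB ⟨a, hanb⟩ (h ▸ memB a d ha hd hcd)
            · exfalso
              rw [Sym2.eq_iff] at h
              rcases h with ⟨h1, h2⟩ | ⟨h1, h2⟩
              · exact hd h2.symm
              · exact hc h2.symm
            · exfalso
              rw [Sym2.eq_iff] at h
              rcases h with ⟨h1, h2⟩ | ⟨h1, h2⟩
              · exact hc h2
              · exact ha h1
            · rw [Sym2.eq_iff] at h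
              rcases h with ⟨h1, h2⟩ | ⟨h1, h2⟩
              · exact absurd h2 hcd.ne
              · subst h1
                rw [evold c a hc ha]
                exact fun h => hboA ⟨a, hanb⟩ (h ▸ memA c a hc ha hcd)
      · rw [evold a b ha hb]
        by_cases hc : c = v
        · subst c
          have hdv : d ≠ v := hcd.ne'
          have hdnb : d ∈ nb := (G.mem_neighborFinset v d).mpr hcd
          rw [evtop d hdnb]
          have had : a = d := by
            rcases hcond with h | h | h | h
            · exact absurd h ha
            · rw [Sym2.eq_iff] at h
              rcases h with ⟨h1, h2⟩ | ⟨h1, h2⟩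
              · exact absurd h1 ha
              · exact absurd h2 hb
            · rw [Sym2.eq_iff] at h
              rcases h with ⟨h1, h2⟩ | ⟨h1, h2⟩
              · exact absurd h2.symm hb
              · exact absurd h2.symm ha
            · rw [Sym2.eq_iff] at h
              rcases h with ⟨h1, h2⟩ | ⟨h1, h2⟩
              · exact absurd h2.symm hdv
              · exact h1
          subst had
          exact fun h => htB ⟨a, hdnb⟩ ((h.symm) ▸ memB a b ha hb hab)
        · by_cases hd : d = v
          · subst d
            have hcv : c ≠ v := hcd.ne
            have hcnb : c ∈ nb := (G.mem_neighborFinset v c).mpr hcd.symm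
            rw [evbot c hcnb]
            rcases hcond with h | h | h | h
            · subst h
              exact fun h => hboB ⟨a, hcnb⟩ (h ▸ memB a b ha hb hab)
            · exfalso
              rw [Sym2.eq_iff] at h
              rcases h with ⟨h1, h2⟩ | ⟨h1, h2⟩
              · exact hb h2
              · exact ha h1
            · rw [Sym2.eq_iff] at h
              rcases h with ⟨h1, h2⟩ | ⟨h1, h2⟩
              · subst h2
                exact fun h => hboA ⟨c, hcnb⟩ (h ▸ memA a c ha hcv hab)
              · exact absurd h1 hab.ne
            · exfalso
              rw [Sym2.eq_iff] at h
              rcases h with ⟨h1, h2⟩ | ⟨h1, h2⟩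
              · exact hcv h2
              · exact ha h1
          · rw [evold c d hc hd]
            apply hφ ((hGadj _ _).mpr hab) ((hGadj _ _).mpr hcd)
            · simp only [ne_eq, Prod.mk.injEq, Subtype.mk.injEq]
              simp only [ne_eq, Prod.mk.injEq] at hne
              exact hne
            · simp only [Sym2.eq_iff, Subtype.mk.injEq]
              simpa only [Sym2.eq_iff] using hcond
  · -- the (·,4) condition
    intro u
    by_cases hu : u = v
    · subst u
      have hsub : {c | ∃ x, G.Adj x v ∧ ψ x v = c} ⊆ ↑(Finset.univ.image bo) := by
        rintro c ⟨x, hx, hxc⟩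
        have hxnb : x ∈ nb := (G.mem_neighborFinset v x).mpr hx.symm
        rw [evbot x hxnb] at hxc
        simp only [Finset.coe_image, Set.mem_image, Finset.mem_coe]
        exact ⟨⟨x, hxnb⟩, Finset.mem_univ _, hxc⟩
      calc {c | ∃ x, G.Adj x v ∧ ψ x v = c}.ncard
          ≤ (↑(Finset.univ.image bo) : Set (Fin (k+4))).ncard :=
            Set.ncard_le_ncard hsub (Finset.finite_toSet _)
        _ = (Finset.univ.image bo).card := Set.ncard_coe_finset _
        _ ≤ (Finset.univ : Finset ↥nb).card := Finset.card_image_le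
        _ = 4 := by rw [Finset.card_univ]; exact hcard4
    · by_cases hunb : u ∈ nb
      · have huv : u ≠ v := hu
        have hset : {c | ∃ x, G.Adj x u ∧ ψ x u = c}
            = ↑(insert (t ⟨u, hunb⟩) (A ⟨u, hm huv⟩)) := by
          ext c
          simp only [Set.mem_setOf_eq, Finset.coe_insert, Set.mem_insert_iff, Finset.mem_coe]
          constructor
          · rintro ⟨x, hx, hxc⟩
            by_cases hxv : x = v
            · subst x
              left; rw [← hxc, evtop u hunb]
            · right
              rw [← hxc, evold x u hxv huv]
              exact memA x u hxv huv hx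
          · rintro (hc | hc)
            · exact ⟨v, (G.mem_neighborFinset v u).mp hunb, by rw [evtop u hunb, hc]⟩
            · simp only [hA, Finset.mem_image, Finset.mem_filter, Finset.mem_univ, true_and] at hc
              obtain ⟨x, hx, hxc⟩ := hc
              have hxv : (↑x : V) ≠ v := Set.mem_compl_singleton_iff.mp x.2
              refine ⟨↑x, hx, ?_⟩
              rw [evold ↑x u hxv huv]
              exact hxc
        rw [hset, Set.ncard_coe_finset]
        by_cases h4 : 4 ≤ (A ⟨u, hm huv⟩).card
        · have ht4 : t ⟨u, hunb⟩ ∈ A ⟨u, hm huv⟩ := htA ⟨u, hunb⟩ h4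
          rw [Finset.insert_eq_self.mpr ht4]
          exact hA4 _
        · have := Finset.card_insert_le (t ⟨u, hunb⟩) (A ⟨u, hm huv⟩)
          omega
      · have hset : {c | ∃ x, G.Adj x u ∧ ψ x u = c}
            = {c | ∃ x, G'.Adj x ⟨u, hm hu⟩ ∧ φ x ⟨u, hm hu⟩ = c} := by
          ext c
          simp only [Set.mem_setOf_eq]
          constructor
          · rintro ⟨x, hx, hxc⟩
            have hxv : x ≠ v := fun hxy => hunb ((G.mem_neighborFinset v u).mpr (hxy ▸ hx))
            refine ⟨⟨x, hm hxv⟩, (hGadj _ _).mpr hx, ?_⟩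
            rw [← hxc, evold x u hxv hu]
          · rintro ⟨x, hx, hxc⟩
            have hxv : (↑x : V) ≠ v := Set.mem_compl_singleton_iff.mp x.2
            refine ⟨↑x, (hGadj _ _).mp hx, ?_⟩
            rw [evold ↑x u hxv hu]
            exact hxc
        rw [hset]
        exact hℓ _
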